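/- Let I_x, I₁ ⊆ ℝ be intervals, θ₁ > 0 and θ₂ ∈ ℝ. Set Ω_per := I_x × I₁ × (0,1) ⊆ ℝ³, Q := {(x,z) ∈ ℝ² : x ∈ I_x and θ₁·z ∈ I₁}, and Ω_{per,θ} := {(x, θ₁·z, θ₂·z + s) : (x,z) ∈ Q, s ∈ (0,1)}. Let V : ℝ³ → ℂ be Lebesgue-integrable on Ω_per and let Ṽ : ℝ³ → ℂ be its ℤe₂-periodic extension, defined by Ṽ(x, z₁, z₂) := V(x, z₁, z₂ − ⌊z₂⌋). Then Ṽ is integrable on Ω_{per,θ}, and ∫_{Ω_per} V d(x,z₁,z₂) = ∫_{Ω_{per,θ}} Ṽ d(x,z₁,z₂), with respect to Lebesgue measure on ℝ³. -/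
import Mathlib


open MeasureTheory Set

lemma fract_shift_map_restrict (a : ℝ) :
    Measure.map (fun t : ℝ => Int.fract (a + t)) (volume.restrict (Set.Ioo (0:ℝ) 1))
      = volume.restrict (Set.Ioo (0:ℝ) 1) := by
  set fa := Int.fract a with hfadef
  have hfa0 : 0 ≤ fa := Int.fract_nonneg a
  have hfa1 : fa < 1 := Int.fract_lt_one a
  have hfa : fa = a - ⌊a⌋ := rfl
  have hmf : Measurable fun t : ℝ => Int.fract (a + t) :=
    (measurable_const.add measurable_id).fract
  have hsplit : Set.Ioo (0:ℝ) 1 = Set.Ioo 0 (1 - fa) ∪ Set.Ico (1 - fa) 1 := by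
    ext t
    simp only [Set.mem_Ioo, Set.mem_union, Set.mem_Ico]
    constructor
    · rintro ⟨h0, h1⟩
      by_cases h : t < 1 - fa
      · exact Or.inl ⟨h0, h⟩
      · exact Or.inr ⟨not_lt.1 h, h1⟩
    · rintro (⟨h0, h1⟩ | ⟨h0, h1⟩)
      · exact ⟨h0, by linarith⟩
      · exact ⟨by linarith, h1⟩
  have hdisj : Disjoint (Set.Ioo (0:ℝ) (1 - fa)) (Set.Ico (1 - fa) 1) :=
    Set.disjoint_left.2 fun t ⟨_, h1⟩ ⟨h2, _⟩ => absurd h2 (not_le.2 h1)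
  rw [hsplit, Measure.restrict_union hdisj measurableSet_Ico, Measure.map_add _ _ hmf]
  have h1 : Measure.map (fun t : ℝ => Int.fract (a + t)) (volume.restrict (Set.Ioo 0 (1 - fa)))
      = volume.restrict (Set.Ioo fa 1) := by
    have heq : (fun t : ℝ => Int.fract (a + t)) =ᵐ[volume.restrict (Set.Ioo 0 (1 - fa))]
        (fun t => fa + t) := by
      refine (ae_restrict_iff' measurableSet_Ioo).2 (Filter.Eventually.of_forall ?_)
      rintro t ⟨h0, h1⟩
      have hfloor : ⌊a + t⌋ = ⌊a⌋ := by
        rw [Int.floor_eq_iff]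
        constructor
        · have := Int.floor_le a; linarith
        · linarith
      show Int.fract (a + t) = fa + t
      rw [← Int.self_sub_floor, hfloor, hfa]
      ring
    rw [Measure.map_congr heq]
    have hpre : Set.Ioo (0:ℝ) (1 - fa) = (fun t => fa + t) ⁻¹' Set.Ioo fa 1 := by
      ext t
      simp only [Set.mem_Ioo, Set.mem_preimage]
      constructor <;> rintro ⟨u, v⟩ <;> constructor <;> linarith
    rw [hpre, ← Measure.restrict_map (measurable_const_add fa) measurableSet_Ioo,
      (measurePreserving_add_left volume fa).map_eq]
  have h2 : Measure.map (fun t : ℝ => Int.fract (a + t)) (volume.restrict (Set.Ico (1 - fa) 1))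
      = volume.restrict (Set.Ico 0 fa) := by
    have heq : (fun t : ℝ => Int.fract (a + t)) =ᵐ[volume.restrict (Set.Ico (1 - fa) 1)]
        (fun t => (fa - 1) + t) := by
      refine (ae_restrict_iff' measurableSet_Ico).2 (Filter.Eventually.of_forall ?_)
      rintro t ⟨h0, h1⟩
      have hfloor : ⌊a + t⌋ = ⌊a⌋ + 1 := by
        rw [Int.floor_eq_iff]
        push_cast
        constructor <;> linarith
      show Int.fract (a + t) = fa - 1 + t
      rw [← Int.self_sub_floor, hfloor, hfa]
      push_cast
      ring
    rw [Measure.map_congr heq]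
    have hpre : Set.Ico (1 - fa) (1:ℝ) = (fun t => (fa - 1) + t) ⁻¹' Set.Ico 0 fa := by
      ext t
      simp only [Set.mem_Ico, Set.mem_preimage]
      constructor <;> rintro ⟨u, v⟩ <;> constructor <;> linarith
    rw [hpre, ← Measure.restrict_map (measurable_const_add (fa - 1)) measurableSet_Ico,
      (measurePreserving_add_left volume (fa - 1)).map_eq]
  rw [h1, h2]
  have h3 : volume.restrict (Set.Ico (0:ℝ) fa) = volume.restrict (Set.Ioo 0 fa) :=
    (Measure.restrict_congr_set Ioo_ae_eq_Ico).symm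
  have hdisj2 : Disjoint (Set.Ioo (0:ℝ) fa) (Set.Ioo fa 1) :=
    Set.disjoint_left.2 fun t ⟨_, h1⟩ ⟨h2, _⟩ => absurd h2 (not_lt.2 h1.le)
  rw [h3, add_comm (volume.restrict (Set.Ioo fa 1)),
    ← Measure.restrict_union hdisj2 measurableSet_Ioo,
    ← Measure.restrict_union hdisj measurableSet_Ico, ← hsplit]
  apply Measure.restrict_congr_set
  have hsub : Set.Ioo 0 fa ∪ Set.Ioo fa 1 ⊆ Set.Ioo (0:ℝ) 1 :=
    Set.union_subset (Set.Ioo_subset_Ioo le_rfl hfa1.le) (Set.Ioo_subset_Ioo hfa0 le_rfl)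
  rw [MeasureTheory.ae_eq_set]
  refine ⟨by rw [Set.diff_eq_empty.2 hsub]; simp, ?_⟩
  refine measure_mono_null (fun t ht => ?_) (Real.volume_singleton (a := fa))
  obtain ⟨⟨h0, h1⟩, hn⟩ := ht
  simp only [Set.mem_union, Set.mem_Ioo, not_or, not_and, not_lt] at hn
  have hle : fa ≤ t := hn.1 h0
  have hge : t ≤ fa := by
    by_contra hgt
    exact absurd (hn.2 (not_le.1 hgt)) (not_le.2 h1)
  exact le_antisymm hge hle

/-- The shear homeomorphism `(x, z₁, z₂) ↦ (x, z₁, c·z₁ + z₂)`. -/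
def shearHomeo (c : ℝ) : (ℝ × ℝ × ℝ) ≃ₜ (ℝ × ℝ × ℝ) where
  toFun p := (p.1, p.2.1, c * p.2.1 + p.2.2)
  invFun p := (p.1, p.2.1, p.2.2 - c * p.2.1)
  left_inv p := by simp
  right_inv p := by simp
  continuous_toFun := by fun_prop
  continuous_invFun := by fun_prop

open MeasureTheory in
/-- Lemma A.1 of the paper: the integral of `V` over the straight cylindrical domain
`Ω_per = I_x × I₁ × (0,1)` equals the integral of its `ℤe₂`-periodic extension `Ṽ` over
the oblique domain `Ω_{per,θ} = T_θ(Q × (0,1))`, where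
`T_θ(x, z, s) = (x, θ₁·z, θ₂·z + s)` and `Q = {(x,z) : x ∈ I_x, θ₁·z ∈ I₁}`. -/
theorem stmt_5
    (Ix I₁ : Set ℝ) (hIx : Ix.OrdConnected) (hI₁ : I₁.OrdConnected)
    (θ₁ θ₂ : ℝ) (hθ₁ : 0 < θ₁)
    (Ωper Ωθ : Set (ℝ × ℝ × ℝ))
    (hΩper : Ωper = Ix ×ˢ I₁ ×ˢ Set.Ioo (0 : ℝ) 1)
    (hΩθ : Ωθ = {y | ∃ x z s : ℝ, x ∈ Ix ∧ θ₁ * z ∈ I₁ ∧ s ∈ Set.Ioo (0 : ℝ) 1 ∧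
        y = (x, θ₁ * z, θ₂ * z + s)})
    (V : ℝ × ℝ × ℝ → ℂ) (hV : IntegrableOn V Ωper)
    (Vt : ℝ × ℝ × ℝ → ℂ)
    (hVt : ∀ y : ℝ × ℝ × ℝ, Vt y = V (y.1, y.2.1, y.2.2 - (⌊y.2.2⌋ : ℝ))) :
    IntegrableOn Vt Ωθ ∧ ∫ y in Ωper, V y = ∫ y in Ωθ, Vt y := by
  set c : ℝ := θ₂ / θ₁ with hc
  set L : ℝ × ℝ × ℝ → ℝ × ℝ × ℝ := fun p => (p.1, p.2.1, c * p.2.1 + p.2.2) with hL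
  set Φ : ℝ × ℝ × ℝ → ℝ × ℝ × ℝ := fun p => (p.1, p.2.1, Int.fract (c * p.2.1 + p.2.2)) with hΦdef
  have hθne : θ₁ ≠ 0 := hθ₁.ne'
  -- description of Ωθ
  have hΩθ' : Ωθ = {p : ℝ × ℝ × ℝ | p.1 ∈ Ix ∧ p.2.1 ∈ I₁ ∧
      p.2.2 - c * p.2.1 ∈ Set.Ioo (0 : ℝ) 1} := by
    rw [hΩθ]
    ext ⟨x, z₁, z₂⟩
    simp only [Set.mem_setOf_eq]
    constructor
    · rintro ⟨x', z, s, hx, hz, hs, heq⟩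
      obtain ⟨hx1, hz1, hz2⟩ : x = x' ∧ z₁ = θ₁ * z ∧ z₂ = θ₂ * z + s := by
        simpa [Prod.ext_iff] using heq
      subst hx1
      refine ⟨hx, hz1 ▸ hz, ?_⟩
      have : z₂ - c * z₁ = s := by rw [hz1, hz2, hc]; field_simp; ring
      rw [this]; exact hs
    · rintro ⟨hx, hz, hs⟩
      refine ⟨x, z₁ / θ₁, z₂ - c * z₁, hx, ?_, hs, ?_⟩
      · rwa [mul_div_cancel₀ _ hθne]
      · rw [mul_div_cancel₀ _ hθne]
        have : θ₂ * (z₁ / θ₁) = c * z₁ := by rw [hc]; ring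
        rw [this]
        simp
  -- Ωper, Ωθ measurable
  have hIxm : MeasurableSet Ix := hIx.measurableSet
  have hI₁m : MeasurableSet I₁ := hI₁.measurableSet
  have hΩperm : MeasurableSet Ωper := by
    rw [hΩper]; exact hIxm.prod (hI₁m.prod measurableSet_Ioo)
  have hΩθm : MeasurableSet Ωθ := by
    rw [hΩθ']
    have : {p : ℝ × ℝ × ℝ | p.1 ∈ Ix ∧ p.2.1 ∈ I₁ ∧ p.2.2 - c * p.2.1 ∈ Set.Ioo (0 : ℝ) 1}
        = (fun p : ℝ × ℝ × ℝ => (p.1, p.2.1, p.2.2 - c * p.2.1)) ⁻¹'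
          (Ix ×ˢ I₁ ×ˢ Set.Ioo (0 : ℝ) 1) := by
      ext p; simp [Set.mem_prod]
    rw [this]
    exact (measurable_fst.prodMk ((measurable_fst.comp measurable_snd).prodMk
      ((measurable_snd.comp measurable_snd).sub
        ((measurable_fst.comp measurable_snd).const_mul c))))
      (hIxm.prod (hI₁m.prod measurableSet_Ioo))
  -- L is measure preserving on volume
  have hLmeas : Measurable L := by fun_prop
  have hLpres : MeasurePreserving L (volume : Measure (ℝ × ℝ × ℝ)) volume := by
    have h2 : MeasurePreserving (fun q : ℝ × ℝ => (q.1, c * q.1 + q.2))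
        ((volume : Measure ℝ).prod volume) ((volume : Measure ℝ).prod volume) :=
      (MeasurePreserving.id volume).skew_product
        (g := fun z₁ t => c * z₁ + t)
        (show Measurable (Function.uncurry fun (z₁ t : ℝ) => c * z₁ + t) from
          (measurable_fst.const_mul c).add measurable_snd)
        (Filter.Eventually.of_forall fun z₁ =>
          (measurePreserving_add_left volume (c * z₁)).map_eq)
    have h3 := (MeasurePreserving.id (volume : Measure ℝ)).skew_product
      (g := fun _ (q : ℝ × ℝ) => (q.1, c * q.1 + q.2))
      (((measurable_fst.comp measurable_snd).prodMk
        (((measurable_fst.comp measurable_snd).const_mul c).add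
          (measurable_snd.comp measurable_snd))))
      (Filter.Eventually.of_forall fun _ => h2.map_eq)
    rw [show (volume : Measure (ℝ × ℝ × ℝ)) =
      ((volume : Measure ℝ).prod ((volume : Measure ℝ).prod volume)) from
        by rw [Measure.volume_eq_prod, Measure.volume_eq_prod]]
    exact h3
  -- L ⁻¹' Ωθ = Ωper
  have hpre : L ⁻¹' Ωθ = Ωper := by
    rw [hΩθ', hΩper]
    ext ⟨x, z₁, z₂⟩
    simp only [Set.mem_preimage, Set.mem_setOf_eq, Set.mem_prod, Set.mem_Ioo, hL]
    constructor
    · rintro ⟨hx, hz, h0, h1⟩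
      refine ⟨hx, hz, by linarith, by linarith⟩
    · rintro ⟨hx, hz, h0, h1⟩
      refine ⟨hx, hz, by linarith, by linarith⟩
  -- map L of restricted measure
  have hmapL : Measure.map L (volume.restrict Ωper) = volume.restrict Ωθ := by
    rw [← hpre, ← Measure.restrict_map hLmeas hΩθm, hLpres.map_eq]
  -- Φ preserves volume.restrict Ωper
  have hΦmeas : Measurable Φ := by
    exact measurable_fst.prodMk ((measurable_fst.comp measurable_snd).prodMk
      ((((measurable_fst.comp measurable_snd).const_mul c).add
        (measurable_snd.comp measurable_snd)).fract))
  have hprodper : volume.restrict Ωper =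
      (volume.restrict Ix).prod ((volume.restrict I₁).prod
        (volume.restrict (Set.Ioo (0:ℝ) 1))) := by
    rw [hΩper, show (volume : Measure (ℝ × ℝ × ℝ)) =
      ((volume : Measure ℝ).prod ((volume : Measure (ℝ × ℝ)))) from Measure.volume_eq_prod ℝ (ℝ × ℝ),
      ← Measure.prod_restrict, show (volume : Measure (ℝ × ℝ)) =
      ((volume : Measure ℝ).prod ((volume : Measure ℝ))) from Measure.volume_eq_prod ℝ ℝ,
      ← Measure.prod_restrict]
  have hΦmap : Measure.map Φ (volume.restrict Ωper) = volume.restrict Ωper := by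
    have h2 : MeasurePreserving (fun q : ℝ × ℝ => (q.1, Int.fract (c * q.1 + q.2)))
        ((volume.restrict I₁).prod (volume.restrict (Set.Ioo (0:ℝ) 1)))
        ((volume.restrict I₁).prod (volume.restrict (Set.Ioo (0:ℝ) 1))) :=
      (MeasurePreserving.id _).skew_product
        (g := fun z₁ t => Int.fract (c * z₁ + t))
        (show Measurable (Function.uncurry fun (z₁ t : ℝ) => Int.fract (c * z₁ + t)) from
          ((measurable_fst.const_mul c).add measurable_snd).fract)
        (Filter.Eventually.of_forall fun z₁ => fract_shift_map_restrict (c * z₁))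
    have h3 := (MeasurePreserving.id (volume.restrict Ix)).skew_product
      (g := fun _ (q : ℝ × ℝ) => (q.1, Int.fract (c * q.1 + q.2)))
      ((measurable_fst.comp measurable_snd).prodMk
        ((((measurable_fst.comp measurable_snd).const_mul c).add
          (measurable_snd.comp measurable_snd)).fract))
      (Filter.Eventually.of_forall fun _ => h2.map_eq)
    rw [hprodper]
    exact h3.map_eq
  -- Vt ∘ L = V ∘ Φ
  have hcomp : Vt ∘ L = V ∘ Φ := by
    funext p
    simp only [Function.comp_apply, hVt, hL, hΦdef]
    rfl
  -- V ∘ Φ is integrable on Ωper with the same integral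
  have hVsm : AEStronglyMeasurable V (Measure.map Φ (volume.restrict Ωper)) := by
    rw [hΦmap]; exact hV.aestronglyMeasurable
  have hΦae : AEMeasurable Φ (volume.restrict Ωper) := hΦmeas.aemeasurable
  have hVΦint : Integrable (V ∘ Φ) (volume.restrict Ωper) := by
    rw [← integrable_map_measure hVsm hΦae, hΦmap]
    exact hV
  have hVΦeq : ∫ p, (V ∘ Φ) p ∂(volume.restrict Ωper) = ∫ y in Ωper, V y := by
    simp only [Function.comp_apply]
    rw [← integral_map hΦae hVsm, hΦmap]
  -- transfer along L using it is a measurable embedding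
  have hLemb : MeasurableEmbedding L := (shearHomeo c).measurableEmbedding
  have hVtL : AEStronglyMeasurable (Vt ∘ L) (volume.restrict Ωper) := by
    rw [hcomp]
    exact hVsm.comp_aemeasurable hΦae
  have hVtsm : AEStronglyMeasurable Vt (volume.restrict Ωθ) := by
    rw [← hmapL]
    exact hLemb.aestronglyMeasurable_map_iff.2 hVtL
  have hVtint : IntegrableOn Vt Ωθ := by
    rw [IntegrableOn, ← hmapL, integrable_map_measure
      (by rw [hmapL]; exact hVtsm) hLmeas.aemeasurable, hcomp]
    exact hVΦint
  refine ⟨hVtint, ?_⟩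
  have : ∫ y in Ωθ, Vt y = ∫ p, (Vt ∘ L) p ∂(volume.restrict Ωper) := by
    rw [← hmapL, integral_map hLmeas.aemeasurable (by rw [hmapL]; exact hVtsm)]
    rfl
  rw [this, hcomp, hVΦeq]
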